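/- Let V : ℝ^p → ℝ be convex, L an m×p real matrix, λ₁ > 0, λ₂ > 0, μ₁ > 0, μ₂ > 0, and define the augmented Lagrangian ℒ(β,a,b,u,v) = V(β) + λ₁‖a‖₁ + λ₂‖b‖₁ + ⟨u, β − a⟩ + ⟨v, Lβ − b⟩ + (μ₁/2)‖β − a‖₂² + (μ₂/2)‖Lβ − b‖₂² for β, a, u ∈ ℝ^p and b, v ∈ ℝ^m. Then β* ∈ ℝ^p is a global minimizer of Φ(β) = V(β) + λ₁‖β‖₁ + λ₂‖Lβ‖₁ if and only if there exist a* ∈ ℝ^p, b* ∈ ℝ^m, u* ∈ ℝ^p, v* ∈ ℝ^m such that (β*, a*, b*, u*, v*) is a saddle point of ℒ, i.e., ℒ(β*, a*, b*, u, v) ≤ ℒ(β*, a*, b*, u*, v*) ≤ ℒ(β, a, b, u*, v*) for all β, a, u ∈ ℝ^p and all b, v ∈ ℝ^m. -/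

import Mathlib

open Filter Matrix Finset

/-- The ℓ1 norm on `Fin d → ℝ`. -/
noncomputable def l1 {d : ℕ} (x : Fin d → ℝ) : ℝ := ∑ i, |x i|

/-- The Euclidean (ℓ2) norm on `Fin d → ℝ`. -/
noncomputable def l2 {d : ℕ} (x : Fin d → ℝ) : ℝ := Real.sqrt (∑ i, (x i) ^ 2)

/-- The Euclidean inner product on `Fin d → ℝ`. -/
def dotp {d : ℕ} (x y : Fin d → ℝ) : ℝ := ∑ i, x i * y i

/-- `g` is a subgradient of `f` at `x`. -/
def IsSubgrad {d : ℕ} (f : (Fin d → ℝ) → ℝ) (x g : Fin d → ℝ) : Prop :=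
  ∀ z, f z ≥ f x + dotp g (z - x)

lemma exists_subgrad {d : ℕ} {f : (Fin d → ℝ) → ℝ} (hf : ConvexOn ℝ Set.univ f)
    (x : Fin d → ℝ) : ∃ g, IsSubgrad f x g := by
  have hcont : Continuous f := continuousOn_univ.mp (hf.continuousOn isOpen_univ)
  set S : Set ((Fin d → ℝ) × ℝ) := {q | f q.1 < q.2} with hSdef
  have hopen : IsOpen S := isOpen_lt (hcont.comp continuous_fst) continuous_snd
  have hconv : Convex ℝ S := by
    rintro ⟨z₁, t₁⟩ h₁ ⟨z₂, t₂⟩ h₂ a b ha hb hab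
    simp only [hSdef, Set.mem_setOf_eq] at h₁ h₂ ⊢
    have hjj := hf.2 (Set.mem_univ z₁) (Set.mem_univ z₂) ha hb hab
    simp only [smul_eq_mul, Prod.smul_fst, Prod.smul_snd, Prod.fst_add, Prod.snd_add] at *
    rcases eq_or_lt_of_le ha with rfl | ha'
    · have hb1 : b = 1 := by linarith
      subst hb1
      simpa using lt_of_le_of_lt (by simpa using hjj) h₂
    · nlinarith [mul_lt_mul_of_pos_left h₁ ha', mul_le_mul_of_nonneg_left h₂.le hb]
  have hx : (x, f x) ∉ S := by simp [hSdef]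
  obtain ⟨φ, hφ⟩ := geometric_hahn_banach_open_point hconv hopen hx
  set c : ℝ := φ (0, 1) with hcdef
  have hlin : ∀ (z : Fin d → ℝ) (t : ℝ), φ (z, t) = φ (z, 0) + t * c := by
    intro z t
    have h : (z, t) = (z, (0:ℝ)) + t • ((0 : Fin d → ℝ), (1:ℝ)) := by
      simp [Prod.ext_iff]
    rw [h, map_add, φ.map_smul, smul_eq_mul, hcdef]
  have hc : c < 0 := by
    have h1 := hφ (x, f x + 1) (by simp [hSdef])
    rw [hlin x (f x + 1), hlin x (f x)] at h1
    linarith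
  have hD : (0:ℝ) < -c := neg_pos.mpr hc
  have key : ∀ z, φ (z, 0) + f z * c ≤ φ (x, 0) + f x * c := by
    intro z
    refine le_of_forall_pos_lt_add fun δ hδ => ?_
    have hε : 0 < δ / (-c) := div_pos hδ hD
    have h1 : φ (z, f z + δ / (-c)) < φ (x, f x) := hφ _ (by simp [hSdef]; linarith)
    rw [hlin z _, hlin x _] at h1
    have h2 : δ / (-c) * c = -δ := by rw [div_mul_eq_mul_div, mul_div_assoc, div_neg, div_self hc.ne]; ring
    nlinarith
  have hsum : ∀ w : Fin d → ℝ, φ (w, 0) = ∑ i, w i * φ (Pi.single i 1, 0) := by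
    intro w
    have h : (w, (0:ℝ)) = ∑ i, w i • ((Pi.single i 1 : Fin d → ℝ), (0:ℝ)) := by
      rw [Prod.ext_iff]
      constructor
      · rw [Prod.fst_sum]
        simp only [Prod.smul_fst]
        rw [show (fun i => w i • (Pi.single i 1 : Fin d → ℝ)) = fun i => Pi.single i (w i) by
          funext i; rw [← Pi.single_smul, smul_eq_mul, mul_one]]
        exact (Finset.univ_sum_single w).symm
      · rw [Prod.snd_sum]; simp
    rw [h, map_sum]
    exact Finset.sum_congr rfl fun i _ => by rw [φ.map_smul, smul_eq_mul]
  refine ⟨fun i => φ (Pi.single i 1, 0) / (-c), fun z => ?_⟩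
  have hdot : dotp (fun i => φ (Pi.single i 1, 0) / (-c)) (z - x)
      = (φ (z, 0) - φ (x, 0)) / (-c) := by
    rw [dotp, hsum z, hsum x, ← Finset.sum_sub_distrib, Finset.sum_div]
    exact Finset.sum_congr rfl fun i _ => by simp [Pi.sub_apply]; ring
  rw [ge_iff_le, hdot]
  have h2 : (φ (z, 0) - φ (x, 0)) / (-c) ≤ f z - f x := by
    rw [div_le_iff₀ hD]; nlinarith [key z]
  linarith

lemma l1_nonneg {d : ℕ} (x : Fin d → ℝ) : 0 ≤ l1 x :=
  Finset.sum_nonneg fun i _ => abs_nonneg _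

lemma l1_sub_le {d : ℕ} (x r : Fin d → ℝ) : l1 x - l1 r ≤ l1 (x - r) := by
  rw [l1, l1, l1, ← Finset.sum_sub_distrib]
  refine Finset.sum_le_sum fun i _ => ?_
  have := abs_sub_abs_le_abs_sub (x i) (r i)
  simpa [Pi.sub_apply] using this

lemma l1_comb {d : ℕ} {a b : ℝ} (ha : 0 ≤ a) (hb : 0 ≤ b) (y z : Fin d → ℝ) :
    l1 (a • y + b • z) ≤ a * l1 y + b * l1 z := by
  rw [l1, l1, l1, Finset.mul_sum, Finset.mul_sum, ← Finset.sum_add_distrib]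
  refine Finset.sum_le_sum fun i _ => ?_
  simp only [Pi.add_apply, Pi.smul_apply, smul_eq_mul]
  calc |a * y i + b * z i| ≤ |a * y i| + |b * z i| := abs_add_le _ _
    _ = a * |y i| + b * |z i| := by
        rw [abs_mul, abs_mul, abs_of_nonneg ha, abs_of_nonneg hb]

lemma l2_zero {d : ℕ} : l2 (0 : Fin d → ℝ) = 0 := by simp [l2]

lemma l2_sq_nonneg {d : ℕ} (x : Fin d → ℝ) : 0 ≤ (l2 x) ^ 2 := sq_nonneg _

lemma dotp_zero_right {d : ℕ} (u : Fin d → ℝ) : dotp u 0 = 0 := by simp [dotp]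

lemma dotp_add_left {d : ℕ} (u w c : Fin d → ℝ) :
    dotp (u + w) c = dotp u c + dotp w c := by
  simp [dotp, ← Finset.sum_add_distrib, add_mul]

lemma dotp_self_nonneg {d : ℕ} (c : Fin d → ℝ) : 0 ≤ dotp c c :=
  Finset.sum_nonneg fun i _ => mul_self_nonneg _

lemma eq_zero_of_dotp_self {d : ℕ} {c : Fin d → ℝ} (h : dotp c c ≤ 0) : c = 0 := by
  have h0 : dotp c c = 0 := le_antisymm h (dotp_self_nonneg c)
  funext i
  have := (Finset.sum_eq_zero_iff_of_nonneg (fun j _ => mul_self_nonneg (c j))).mp h0 i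
    (Finset.mem_univ i)
  have : c i * c i = 0 := this
  simpa using mul_self_eq_zero.mp this

/-- Optimality for the generalized fused Lasso is equivalent to being part of a
saddle point of the augmented Lagrangian. -/
theorem fusedLasso_saddlePoint_iff
    {p m : ℕ} (hp : 0 < p) (hm : 0 < m)
    (V : (Fin p → ℝ) → ℝ) (hV : ConvexOn ℝ Set.univ V)
    (L : Matrix (Fin m) (Fin p) ℝ)
    (lam1 lam2 mu1 mu2 : ℝ)
    (hlam1 : 0 < lam1) (hlam2 : 0 < lam2)
    (hmu1 : 0 < mu1) (hmu2 : 0 < mu2)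
    (Bstar : Fin p → ℝ) :
    (∀ x : Fin p → ℝ,
      V Bstar + lam1 * l1 Bstar + lam2 * l1 (L.mulVec Bstar)
        ≤ V x + lam1 * l1 x + lam2 * l1 (L.mulVec x)) ↔
    (∃ (astar ustar : Fin p → ℝ) (bstar vstar : Fin m → ℝ),
      ∀ (x a u : Fin p → ℝ) (b v : Fin m → ℝ),
        (V Bstar + lam1 * l1 astar + lam2 * l1 bstar
            + dotp u (Bstar - astar) + dotp v (L.mulVec Bstar - bstar)
            + (mu1 / 2) * (l2 (Bstar - astar)) ^ 2
            + (mu2 / 2) * (l2 (L.mulVec Bstar - bstar)) ^ 2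
          ≤ V Bstar + lam1 * l1 astar + lam2 * l1 bstar
            + dotp ustar (Bstar - astar) + dotp vstar (L.mulVec Bstar - bstar)
            + (mu1 / 2) * (l2 (Bstar - astar)) ^ 2
            + (mu2 / 2) * (l2 (L.mulVec Bstar - bstar)) ^ 2) ∧
        (V Bstar + lam1 * l1 astar + lam2 * l1 bstar
            + dotp ustar (Bstar - astar) + dotp vstar (L.mulVec Bstar - bstar)
            + (mu1 / 2) * (l2 (Bstar - astar)) ^ 2
            + (mu2 / 2) * (l2 (L.mulVec Bstar - bstar)) ^ 2
          ≤ V x + lam1 * l1 a + lam2 * l1 b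
            + dotp ustar (x - a) + dotp vstar (L.mulVec x - b)
            + (mu1 / 2) * (l2 (x - a)) ^ 2
            + (mu2 / 2) * (l2 (L.mulVec x - b)) ^ 2)) := by
  constructor
  · -- forward direction
    intro hmin
    set Φs := V Bstar + lam1 * l1 Bstar + lam2 * l1 (L.mulVec Bstar) with hΦs
    -- extraction maps
    set P : (Fin (p + m) → ℝ) → (Fin p → ℝ) := fun w i => w (Fin.castAdd m i) with hP
    set Q : (Fin (p + m) → ℝ) → (Fin m → ℝ) := fun w j => w (Fin.natAdd p j) with hQ
    set F : (Fin p → ℝ) → (Fin (p + m) → ℝ) → ℝ := fun x w =>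
      V x + lam1 * l1 (x - P w) + lam2 * l1 (L.mulVec x - Q w) with hF
    set h : (Fin (p + m) → ℝ) → ℝ := fun w => sInf (Set.range fun x => F x w) with hh
    have hlb : ∀ w x, Φs - lam1 * l1 (P w) - lam2 * l1 (Q w) ≤ F x w := by
      intro w x
      have h1 : l1 x - l1 (P w) ≤ l1 (x - P w) := l1_sub_le _ _
      have h2 : l1 (L.mulVec x) - l1 (Q w) ≤ l1 (L.mulVec x - Q w) := l1_sub_le _ _
      have h3 := hmin x
      show Φs - lam1 * l1 (P w) - lam2 * l1 (Q w)
          ≤ V x + lam1 * l1 (x - P w) + lam2 * l1 (L.mulVec x - Q w)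
      nlinarith [mul_le_mul_of_nonneg_left h1 hlam1.le,
        mul_le_mul_of_nonneg_left h2 hlam2.le]
    have hbdd : ∀ w, BddBelow (Set.range fun x => F x w) := by
      intro w
      exact ⟨Φs - lam1 * l1 (P w) - lam2 * l1 (Q w), by
        rintro y ⟨x, rfl⟩; exact hlb w x⟩
    have hne : ∀ w, (Set.range fun x => F x w).Nonempty := fun w => ⟨F Bstar w, ⟨Bstar, rfl⟩⟩
    have hle : ∀ w x, h w ≤ F x w := fun w x => csInf_le (hbdd w) ⟨x, rfl⟩
    have hge : ∀ w (t : ℝ), (∀ x, t ≤ F x w) → t ≤ h w := fun w t ht =>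
      le_csInf (hne w) (by rintro y ⟨x, rfl⟩; exact ht x)
    -- h is convex
    have hconv : ConvexOn ℝ Set.univ h := by
      refine ⟨convex_univ, ?_⟩
      rintro w₁ - w₂ - a b ha hb hab
      simp only [smul_eq_mul]
      refine le_of_forall_pos_le_add fun ε hε => ?_
      obtain ⟨y₁, ⟨x₁, rfl⟩, hy₁⟩ :=
        exists_lt_of_csInf_lt (hne w₁) (lt_add_of_pos_right (h w₁) hε)
      obtain ⟨y₂, ⟨x₂, rfl⟩, hy₂⟩ :=
        exists_lt_of_csInf_lt (hne w₂) (lt_add_of_pos_right (h w₂) hε)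
      have hjoint : F (a • x₁ + b • x₂) (a • w₁ + b • w₂) ≤ a * F x₁ w₁ + b * F x₂ w₂ := by
        have hVc : V (a • x₁ + b • x₂) ≤ a * V x₁ + b * V x₂ := by
          simpa using hV.2 (Set.mem_univ x₁) (Set.mem_univ x₂) ha hb hab
        have e1 : (a • x₁ + b • x₂) - P (a • w₁ + b • w₂)
            = a • (x₁ - P w₁) + b • (x₂ - P w₂) := by
          funext i
          simp [hP, smul_eq_mul]
          ring
        have e2 : L.mulVec (a • x₁ + b • x₂) - Q (a • w₁ + b • w₂)
            = a • (L.mulVec x₁ - Q w₁) + b • (L.mulVec x₂ - Q w₂) := by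
          rw [Matrix.mulVec_add, Matrix.mulVec_smul, Matrix.mulVec_smul]
          funext j
          simp [hQ, smul_eq_mul]
          ring
        have c1 := l1_comb ha hb (x₁ - P w₁) (x₂ - P w₂)
        have c2 := l1_comb ha hb (L.mulVec x₁ - Q w₁) (L.mulVec x₂ - Q w₂)
        show V (a • x₁ + b • x₂) + lam1 * l1 ((a • x₁ + b • x₂) - P (a • w₁ + b • w₂))
            + lam2 * l1 (L.mulVec (a • x₁ + b • x₂) - Q (a • w₁ + b • w₂))
          ≤ a * (V x₁ + lam1 * l1 (x₁ - P w₁) + lam2 * l1 (L.mulVec x₁ - Q w₁))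
            + b * (V x₂ + lam1 * l1 (x₂ - P w₂) + lam2 * l1 (L.mulVec x₂ - Q w₂))
        rw [e1, e2]
        have hl1 := mul_le_mul_of_nonneg_left c1 hlam1.le
        have hl2 := mul_le_mul_of_nonneg_left c2 hlam2.le
        nlinarith [hVc, hl1, hl2]
      calc h (a • w₁ + b • w₂) ≤ F (a • x₁ + b • x₂) (a • w₁ + b • w₂) := hle _ _
        _ ≤ a * F x₁ w₁ + b * F x₂ w₂ := hjoint
        _ ≤ a * (h w₁ + ε) + b * (h w₂ + ε) := by
            have := mul_le_mul_of_nonneg_left hy₁.le ha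
            have := mul_le_mul_of_nonneg_left hy₂.le hb
            nlinarith
        _ = a * h w₁ + b * h w₂ + ε := by linear_combination ε * hab
    -- value at 0 is Φs
    have hP0 : P 0 = 0 := rfl
    have hQ0 : Q 0 = 0 := rfl
    have hzero : h 0 = Φs := by
      apply le_antisymm
      · have := hle 0 Bstar
        simpa [hF, hP0, hQ0] using this
      · refine hge 0 Φs fun x => ?_
        have := hmin x
        simpa [hF, hP0, hQ0] using this
    obtain ⟨G, hG⟩ := exists_subgrad hconv 0
    refine ⟨Bstar, (fun i => -G (Fin.castAdd m i)), L.mulVec Bstar,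
      (fun j => -G (Fin.natAdd p j)), fun x a u b v => ?_⟩
    have hkey : ∀ (x a : Fin p → ℝ) (b : Fin m → ℝ),
        Φs ≤ V x + lam1 * l1 a + lam2 * l1 b
          + dotp (fun i => -G (Fin.castAdd m i)) (x - a)
          + dotp (fun j => -G (Fin.natAdd p j)) (L.mulVec x - b) := by
      intro x a b
      set w : Fin (p + m) → ℝ := Fin.append (x - a) (L.mulVec x - b) with hw
      have hPw : P w = x - a := by funext i; simp [hP, hw, Fin.append_left]
      have hQw : Q w = L.mulVec x - b := by funext j; simp [hQ, hw, Fin.append_right]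
      have h1 : h w ≤ V x + lam1 * l1 a + lam2 * l1 b := by
        have := hle w x
        rw [hF] at this
        simp only [hPw, hQw, sub_sub_cancel] at this
        exact this
      have h2 := hG w
      rw [hzero, sub_zero] at h2
      have hsplit : dotp G w = dotp (fun i => G (Fin.castAdd m i)) (x - a)
          + dotp (fun j => G (Fin.natAdd p j)) (L.mulVec x - b) := by
        rw [dotp, Fin.sum_univ_add]
        congr 1
        · exact Finset.sum_congr rfl fun i _ => by simp [hw, Fin.append_left]
        · exact Finset.sum_congr rfl fun j _ => by simp [hw, Fin.append_right]
      rw [hsplit] at h2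
      have hn1 : dotp (fun i => -G (Fin.castAdd m i)) (x - a)
          = -dotp (fun i => G (Fin.castAdd m i)) (x - a) := by
        simp [dotp, Finset.sum_neg_distrib]
      have hn2 : dotp (fun j => -G (Fin.natAdd p j)) (L.mulVec x - b)
          = -dotp (fun j => G (Fin.natAdd p j)) (L.mulVec x - b) := by
        simp [dotp, Finset.sum_neg_distrib]
      rw [hn1, hn2]
      linarith
    constructor
    · simp [sub_self, dotp_zero_right]
    · have hk := hkey x a b
      have q1 := l2_sq_nonneg (x - a)
      have q2 := l2_sq_nonneg (L.mulVec x - b)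
      simp only [sub_self, dotp_zero_right, l2_zero, add_zero]
      nlinarith [hmu1.le, hmu2.le]
  · -- reverse direction
    rintro ⟨astar, ustar, bstar, vstar, hsad⟩ x
    have h1 := (hsad Bstar Bstar (ustar + (Bstar - astar)) (L.mulVec Bstar)
      (vstar + (L.mulVec Bstar - bstar))).1
    rw [dotp_add_left, dotp_add_left] at h1
    have hz : dotp (Bstar - astar) (Bstar - astar)
        + dotp (L.mulVec Bstar - bstar) (L.mulVec Bstar - bstar) ≤ 0 := by linarith
    have hc1z : Bstar - astar = 0 := eq_zero_of_dotp_self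
      (by linarith [dotp_self_nonneg (L.mulVec Bstar - bstar)])
    have hc2z : L.mulVec Bstar - bstar = 0 := eq_zero_of_dotp_self
      (by linarith [dotp_self_nonneg (Bstar - astar)])
    have hast : astar = Bstar := (sub_eq_zero.mp hc1z).symm
    have hbst : bstar = L.mulVec Bstar := (sub_eq_zero.mp hc2z).symm
    subst hast
    subst hbst
    have h2 := (hsad x x ustar (L.mulVec x) vstar).2
    simpa [sub_self, dotp_zero_right, l2_zero] using h2
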